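/- Let H ∈ (0, 1/2), let q ≥ 1 be an integer, and define R_H(s,t) = (1/2)·( s^{2H} + t^{2H} − |t−s|^{2H} ) for s,t ≥ 0. For integers n ≥ 1 and j,k ∈ {0,…,n−1} set ρ^{(n)}_{j,k} = R_H((j+1)/n,(k+1)/n) − R_H((j+1)/n,k/n) − R_H(j/n,(k+1)/n) + R_H(j/n,k/n). Then there exists a constant C_{H,q} > 0, depending only on H and q, such that for every integer n ≥ 1: Σ_{j=0}^{n−1} Σ_{k=0}^{n−1} | ρ^{(n)}_{j,k} |^q ≤ C_{H,q} · n^{1−2qH}. -/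

import Mathlib

/-- Covariance function of fractional Brownian motion with Hurst parameter `H`. -/
noncomputable def fbmCov (H : ℝ) (s t : ℝ) : ℝ :=
  (1 / 2) * (s ^ (2 * H) + t ^ (2 * H) - |t - s| ^ (2 * H))

/-- Covariance of the increments `B_{(j+1)/n} − B_{j/n}` and `B_{(k+1)/n} − B_{k/n}`. -/
noncomputable def incCov (H : ℝ) (n j k : ℕ) : ℝ :=
  fbmCov H ((j + 1 : ℝ) / n) ((k + 1 : ℝ) / n) - fbmCov H ((j + 1 : ℝ) / n) ((k : ℝ) / n)
    - fbmCov H ((j : ℝ) / n) ((k + 1 : ℝ) / n) + fbmCov H ((j : ℝ) / n) ((k : ℝ) / n)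


open Finset

noncomputable def Gaux (H : ℝ) (d : ℕ) : ℝ :=
  (1/2) * (|(d:ℝ) - 1| ^ (2*H) + ((d:ℝ) + 1) ^ (2*H) - 2 * (d:ℝ) ^ (2*H))

noncomputable def Aaux (H : ℝ) (i : ℕ) : ℝ := ((i:ℝ) + 1) ^ (2*H) - (i:ℝ) ^ (2*H)

lemma concave_step {H : ℝ} (hH0 : 0 < H) (hH1 : H < 1/2) (x : ℝ) (hx : 0 ≤ x) :
    (x + 2) ^ (2*H) + x ^ (2*H) ≤ 2 * (x + 1) ^ (2*H) := by
  have hc := Real.concaveOn_rpow (p := 2*H) (by linarith) (by linarith)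
  have h := hc.2 (Set.mem_Ici.2 hx) (Set.mem_Ici.2 (by linarith : (0:ℝ) ≤ x + 2))
    (by norm_num : (0:ℝ) ≤ 1/2) (by norm_num : (0:ℝ) ≤ 1/2) (by norm_num)
  simp only [smul_eq_mul] at h
  rw [show (1/2 : ℝ) * x + (1/2) * (x + 2) = x + 1 by ring] at h
  linarith

lemma A_nonneg {H : ℝ} (hH0 : 0 < H) (i : ℕ) : 0 ≤ Aaux H i := by
  have := Real.rpow_le_rpow (x := (i:ℝ)) (y := (i:ℝ)+1) (by positivity) (by linarith)
    (by linarith : (0:ℝ) ≤ 2*H)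
  simpa [Aaux, sub_nonneg] using this

lemma A_succ_le {H : ℝ} (hH0 : 0 < H) (hH1 : H < 1/2) (i : ℕ) :
    Aaux H (i + 1) ≤ Aaux H i := by
  have h := concave_step hH0 hH1 (i : ℝ) (by positivity)
  unfold Aaux
  push_cast
  rw [show ((i:ℝ) + 1 + 1) = (i:ℝ) + 2 by ring]
  linarith

lemma A_zero {H : ℝ} (hH0 : 0 < H) : Aaux H 0 = 1 := by
  simp [Aaux, Real.zero_rpow (by positivity : (2*H) ≠ 0), Real.one_rpow]

lemma A_le_one {H : ℝ} (hH0 : 0 < H) (hH1 : H < 1/2) (i : ℕ) : Aaux H i ≤ 1 := by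
  induction i with
  | zero => rw [A_zero hH0]
  | succ i ih => exact le_trans (A_succ_le hH0 hH1 i) ih

lemma G_succ {H : ℝ} (hH0 : 0 < H) (i : ℕ) :
    Gaux H (i + 1) = (1/2) * (Aaux H (i+1) - Aaux H i) := by
  unfold Gaux Aaux
  push_cast
  rw [show ((i:ℝ) + 1 - 1) = (i:ℝ) by ring, abs_of_nonneg (by positivity : (0:ℝ) ≤ (i:ℝ)),
    show ((i:ℝ) + 1 + 1) = (i:ℝ) + 2 by ring]
  ring

lemma G_succ_abs {H : ℝ} (hH0 : 0 < H) (hH1 : H < 1/2) (i : ℕ) :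
    |Gaux H (i + 1)| = (1/2) * (Aaux H i - Aaux H (i+1)) := by
  rw [G_succ hH0 i, abs_mul, abs_of_nonneg (by norm_num : (0:ℝ) ≤ 1/2),
    abs_of_nonpos (by linarith [A_succ_le hH0 hH1 i] : Aaux H (i+1) - Aaux H i ≤ 0)]
  ring

lemma G_succ_abs_le_one {H : ℝ} (hH0 : 0 < H) (hH1 : H < 1/2) (i : ℕ) :
    |Gaux H (i + 1)| ≤ 1 := by
  rw [G_succ_abs hH0 hH1 i]
  have h1 := A_le_one hH0 hH1 i
  have h2 := A_nonneg hH0 (i+1)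
  linarith

lemma telescope_bound {H : ℝ} (hH0 : 0 < H) (hH1 : H < 1/2) (q : ℕ) (hq : 1 ≤ q) (m : ℕ) :
    ∑ i ∈ range m, |Gaux H (i + 1)| ^ q ≤ 1/2 := by
  have step : ∀ i, |Gaux H (i + 1)| ^ q ≤ |Gaux H (i + 1)| := by
    intro i
    calc |Gaux H (i + 1)| ^ q ≤ |Gaux H (i + 1)| ^ 1 :=
          pow_le_pow_of_le_one (abs_nonneg _) (G_succ_abs_le_one hH0 hH1 i) hq
      _ = |Gaux H (i + 1)| := pow_one _
  calc ∑ i ∈ range m, |Gaux H (i + 1)| ^ q ≤ ∑ i ∈ range m, |Gaux H (i + 1)| :=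
        Finset.sum_le_sum fun i _ => step i
    _ = ∑ i ∈ range m, (1/2) * (Aaux H i - Aaux H (i+1)) := by
        exact Finset.sum_congr rfl fun i _ => G_succ_abs hH0 hH1 i
    _ = (1/2) * (Aaux H 0 - Aaux H m) := by
        rw [← Finset.mul_sum, Finset.sum_range_sub' (Aaux H) m]
    _ ≤ 1/2 := by
        have h1 := A_le_one hH0 hH1 0
        have h2 := A_nonneg hH0 m
        linarith

lemma G_zero {H : ℝ} (hH0 : 0 < H) : Gaux H 0 = 1 := by
  have : |(0:ℝ) - 1| = 1 := by norm_num
  simp [Gaux, this, Real.one_rpow, Real.zero_rpow (by positivity : (2*H) ≠ 0)]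
  norm_num

lemma combo (H u v : ℝ) :
    fbmCov H (u+1) (v+1) - fbmCov H (u+1) v - fbmCov H u (v+1) + fbmCov H u v
      = (1/2) * (|v - u - 1| ^ (2*H) + |v - u + 1| ^ (2*H) - 2 * |v - u| ^ (2*H)) := by
  unfold fbmCov
  rw [show v + 1 - (u + 1) = v - u by ring, show v - (u + 1) = v - u - 1 by ring,
    show v + 1 - u = v - u + 1 by ring]
  ring

lemma combo_dist (H : ℝ) (j k : ℕ) :
    (1/2) * (|(k:ℝ) - (j:ℝ) - 1| ^ (2*H) + |(k:ℝ) - (j:ℝ) + 1| ^ (2*H)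
      - 2 * |(k:ℝ) - (j:ℝ)| ^ (2*H)) = Gaux H (Nat.dist j k) := by
  rcases le_total j k with h | h
  · have hd : (Nat.dist j k : ℝ) = (k:ℝ) - (j:ℝ) := by
      rw [Nat.dist_eq_sub_of_le h]
      push_cast [Nat.cast_sub h]
      ring
    have hd0 : (0:ℝ) ≤ (k:ℝ) - (j:ℝ) := by
      have : (j:ℝ) ≤ (k:ℝ) := by exact_mod_cast h
      linarith
    unfold Gaux
    rw [hd, abs_of_nonneg (by linarith : (0:ℝ) ≤ (k:ℝ) - (j:ℝ) + 1), abs_of_nonneg hd0]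
  · have hd : (Nat.dist j k : ℝ) = (j:ℝ) - (k:ℝ) := by
      rw [Nat.dist_eq_sub_of_le_right h]
      push_cast [Nat.cast_sub h]
      ring
    have hd0 : (0:ℝ) ≤ (j:ℝ) - (k:ℝ) := by
      have : (k:ℝ) ≤ (j:ℝ) := by exact_mod_cast h
      linarith
    unfold Gaux
    rw [hd, show (k:ℝ) - (j:ℝ) - 1 = -(((j:ℝ) - (k:ℝ)) + 1) by ring, abs_neg,
      abs_of_nonneg (by linarith : (0:ℝ) ≤ ((j:ℝ) - (k:ℝ)) + 1),
      show (k:ℝ) - (j:ℝ) + 1 = -(((j:ℝ) - (k:ℝ)) - 1) by ring, abs_neg,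
      show (k:ℝ) - (j:ℝ) = -((j:ℝ) - (k:ℝ)) by ring, abs_neg, abs_of_nonneg hd0]
    ring

lemma incCov_eq {H : ℝ} (hH0 : 0 < H) (n j k : ℕ) (hn : 1 ≤ n) :
    incCov H n j k = (n:ℝ) ^ (-(2*H)) * Gaux H (Nat.dist j k) := by
  have hN : (0:ℝ) < (n:ℝ) := by exact_mod_cast hn
  have hnp : (0:ℝ) < (n:ℝ) ^ (2*H) := Real.rpow_pos_of_pos hN _
  have hscale : ∀ a b : ℝ, 0 ≤ a → 0 ≤ b →
      fbmCov H (a / n) (b / n) = (n:ℝ) ^ (-(2*H)) * fbmCov H a b := by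
    intro a b ha hb
    unfold fbmCov
    rw [Real.div_rpow ha hN.le, Real.div_rpow hb hN.le,
      show b / n - a / n = (b - a) / n by ring, abs_div, abs_of_pos hN,
      Real.div_rpow (abs_nonneg _) hN.le, Real.rpow_neg hN.le]
    field_simp
  unfold incCov
  rw [hscale _ _ (by positivity) (by positivity), hscale _ _ (by positivity) (by positivity),
    hscale _ _ (by positivity) (by positivity), hscale _ _ (by positivity) (by positivity),
    ← combo_dist H j k]
  have hcb := combo H (j:ℝ) (k:ℝ)
  linear_combination ((n:ℝ) ^ (-(2*H))) * hcb

lemma gaux_inner_sum {H : ℝ} (hH0 : 0 < H) (hH1 : H < 1/2) (q : ℕ) (hq : 1 ≤ q)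
    {n j : ℕ} (hj : j < n) :
    ∑ k ∈ range n, |Gaux H (Nat.dist j k)| ^ q ≤ 2 := by
  rw [← Finset.sum_range_add_sum_Ico _ (show j + 1 ≤ n from hj),
    Finset.sum_range_succ]
  have hFj : |Gaux H (Nat.dist j j)| ^ q = 1 := by
    rw [Nat.dist_self, G_zero hH0, abs_one, one_pow]
  have hB : ∑ k ∈ range j, |Gaux H (Nat.dist j k)| ^ q
      = ∑ i ∈ range j, |Gaux H (i + 1)| ^ q := by
    rw [← Finset.sum_range_reflect]
    refine Finset.sum_congr rfl fun i hi => ?_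
    have hi' := Finset.mem_range.1 hi
    have hd : Nat.dist j (j - 1 - i) = i + 1 := by
      rw [Nat.dist_eq_sub_of_le_right (by omega : j - 1 - i ≤ j)]
      omega
    rw [hd]
  have hC : ∑ k ∈ Ico (j+1) n, |Gaux H (Nat.dist j k)| ^ q
      = ∑ i ∈ range (n - (j+1)), |Gaux H (i + 1)| ^ q := by
    rw [Finset.sum_Ico_eq_sum_range]
    refine Finset.sum_congr rfl fun i hi => ?_
    have hd : Nat.dist j (j + 1 + i) = i + 1 := by
      rw [Nat.dist_eq_sub_of_le (by omega : j ≤ j + 1 + i)]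
      omega
    rw [hd]
  rw [hB, hC, hFj]
  have h1 := telescope_bound hH0 hH1 q hq j
  have h2 := telescope_bound hH0 hH1 q hq (n - (j+1))
  linarith

theorem fbm_increment_covariance_power_sum_bound
    (H : ℝ) (hH : H ∈ Set.Ioo (0 : ℝ) (1 / 2)) (q : ℕ) (hq : 1 ≤ q) :
    ∃ C : ℝ, 0 < C ∧ ∀ n : ℕ, 1 ≤ n →
      ∑ j ∈ Finset.range n, ∑ k ∈ Finset.range n, |incCov H n j k| ^ q
        ≤ C * (n : ℝ) ^ (1 - 2 * q * H : ℝ) := by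
  obtain ⟨hH0, hH1⟩ := hH
  refine ⟨2, by norm_num, fun n hn => ?_⟩
  have hN : (0:ℝ) < (n:ℝ) := by exact_mod_cast hn
  set c : ℝ := (n:ℝ) ^ (-(2*H)) with hcdef
  have hc0 : 0 ≤ c := Real.rpow_nonneg hN.le _
  have hrw : ∀ j k : ℕ, |incCov H n j k| ^ q = c ^ q * |Gaux H (Nat.dist j k)| ^ q := by
    intro j k
    rw [incCov_eq hH0 n j k hn, abs_mul, abs_of_nonneg hc0, mul_pow]
  have hcq : c ^ q = (n:ℝ) ^ ((-(2*H)) * (q:ℝ)) := by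
    rw [hcdef, ← Real.rpow_natCast ((n:ℝ) ^ (-(2*H))) q, ← Real.rpow_mul hN.le]
  calc ∑ j ∈ Finset.range n, ∑ k ∈ Finset.range n, |incCov H n j k| ^ q
      = c ^ q * ∑ j ∈ range n, ∑ k ∈ range n, |Gaux H (Nat.dist j k)| ^ q := by
        simp_rw [hrw, ← Finset.mul_sum]
    _ ≤ c ^ q * ((n:ℝ) * 2) := by
        refine mul_le_mul_of_nonneg_left ?_ (by positivity)
        calc ∑ j ∈ range n, ∑ k ∈ range n, |Gaux H (Nat.dist j k)| ^ q
            ≤ ∑ _j ∈ range n, (2:ℝ) :=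
              Finset.sum_le_sum fun j hj => gaux_inner_sum hH0 hH1 q hq (Finset.mem_range.1 hj)
          _ = (n:ℝ) * 2 := by simp [mul_comm]
    _ = 2 * (n:ℝ) ^ (1 - 2 * q * H : ℝ) := by
        rw [hcq, show (1 - 2 * (q:ℝ) * H) = (-(2*H)) * (q:ℝ) + 1 by ring,
          Real.rpow_add_one (ne_of_gt hN)]
        ring
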